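/- Let G and H be groups with actions by automorphisms of each on the other, and let η : G → H be a bijective 1-cocycle with η⁻¹ ∈ Z¹(H, G). Then the kernel Δ of the homomorphism ω_G : G → Aut(H) defining the action of G on H is stable under the action of H on G. -/
import Mathlib


theorem cocycle_ker_stable {G H : Type*} [Group G] [Group H]
    (ωG : G →* MulAut H) (ωH : H →* MulAut G) (η : G ≃ H)
    (hη : ∀ g₁ g₂ : G, η (g₁ * g₂) = η g₁ * (ωG g₁) (η g₂))
    (hη' : ∀ h₁ h₂ : H, η.symm (h₁ * h₂) = η.symm h₁ * (ωH h₁) (η.symm h₂)) :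
    ∀ h : H, ∀ g ∈ ωG.ker, (ωH h) g ∈ ωG.ker := by
  have hA : ∀ (h : H) (g : G), η ((ωH h) g) = (ωG (η.symm h))⁻¹ (η g) := by
    intro h g
    have h1 := hη' h (η g)
    rw [Equiv.symm_apply_apply] at h1
    have h2 := hη (η.symm h) ((ωH h) g)
    rw [← h1, Equiv.apply_symm_apply, Equiv.apply_symm_apply] at h2
    have h3 := mul_left_cancel h2
    rw [h3]
    simp
  intro h g hg
  rw [MonoidHom.mem_ker] at hg ⊢
  ext k
  obtain ⟨g', rfl⟩ := η.surjective k
  have key : η ((ωH h) g * g') = η ((ωH h) g) * η g' := by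
    have e : (ωH h) g * g' = (ωH h) (g * (ωH h)⁻¹ g') := by
      rw [map_mul]; simp
    rw [e, hA, hη g ((ωH h)⁻¹ g'), hg, map_mul]
    congr 1
    · rw [← hA]
    · simp only [MulAut.one_apply]; rw [← hA]; simp
  have h4 := hη ((ωH h) g) g'
  rw [key] at h4
  have := mul_left_cancel h4.symm
  simpa using this
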